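/- With the extremal setup below, assume further that v₁v_n is the unique negative edge of Γ′ and that x_n ≤ x₁. Then, for all sufficiently large n, any two distinct vertices belonging to N(v₁) \ (N(v_n) ∪ {v_n}) are adjacent in Γ′ (so this set induces a complete subgraph, all of whose edges are positive). -/

import Mathlib

open Matrix

/-- A signed graph of order `n`: a real symmetric `n × n` matrix with zero diagonal
whose off-diagonal entries lie in `{-1, 0, 1}`. -/
def IsSignedGraph {n : ℕ} (A : Matrix (Fin n) (Fin n) ℝ) : Prop :=
  A.IsSymm ∧ (∀ i, A i i = 0) ∧ ∀ i j, A i j = -1 ∨ A i j = 0 ∨ A i j = 1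

/-- The index (largest eigenvalue) of a signed graph. -/
noncomputable def lambdaMax {n : ℕ} (A : Matrix (Fin n) (Fin n) ℝ) : ℝ :=
  sSup (spectrum ℝ A)

/-- The smallest eigenvalue of a signed graph. -/
noncomputable def lambdaMin {n : ℕ} (A : Matrix (Fin n) (Fin n) ℝ) : ℝ :=
  sInf (spectrum ℝ A)

/-- The spectral radius of a signed graph. -/
noncomputable def rho {n : ℕ} (A : Matrix (Fin n) (Fin n) ℝ) : ℝ :=
  max (lambdaMax A) (-(lambdaMin A))

/-- There is a cycle, all of whose vertices lie in `s`, along whose edges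
the product of the entries of `A` is negative. -/
def HasNegCycleOn {n : ℕ} (A : Matrix (Fin n) (Fin n) ℝ) (s : Set (Fin n)) : Prop :=
  ∃ m : ℕ, 3 ≤ m ∧ ∃ c : ℕ → Fin n,
    (∀ i < m, ∀ j < m, c i = c j → i = j) ∧ (∀ i < m, c i ∈ s) ∧
    (∀ i < m, A (c i) (c ((i + 1) % m)) ≠ 0) ∧
    (∏ i ∈ Finset.range m, A (c i) (c ((i + 1) % m))) < 0

/-- A signed graph is unbalanced if it has a negative cycle. -/
def IsUnbalanced {n : ℕ} (A : Matrix (Fin n) (Fin n) ℝ) : Prop :=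
  HasNegCycleOn A Set.univ

/-- An `m`-element set of pairwise adjacent vertices whose induced signed complete
subgraph is unbalanced. -/
def IsKmMinus {n : ℕ} (A : Matrix (Fin n) (Fin n) ℝ) (m : ℕ) (s : Finset (Fin n)) : Prop :=
  s.card = m ∧ (∀ i ∈ s, ∀ j ∈ s, i ≠ j → A i j ≠ 0) ∧ HasNegCycleOn A ↑s

/-- A `K₄⁻` of a signed graph. -/
def IsK4Minus {n : ℕ} (A : Matrix (Fin n) (Fin n) ℝ) (s : Finset (Fin n)) : Prop :=
  IsKmMinus A 4 s

/-- A signed graph is `t𝒦₄⁻`-free if it contains fewer than `t` distinct `K₄⁻`'s. -/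
def TK4Free {n : ℕ} (t : ℕ) (A : Matrix (Fin n) (Fin n) ℝ) : Prop :=
  {s : Finset (Fin n) | IsK4Minus A s}.ncard < t

/-- Switching isomorphism of signed graphs: `B = (PD) A (PD)ᵀ` for a permutation
matrix `P` and a `±1` diagonal matrix `D`. -/
def SwitchIso {n : ℕ} (A B : Matrix (Fin n) (Fin n) ℝ) : Prop :=
  ∃ (σ : Equiv.Perm (Fin n)) (d : Fin n → ℝ), (∀ i, d i = 1 ∨ d i = -1) ∧
    B = (σ.permMatrix ℝ * Matrix.diagonal d) * A * (σ.permMatrix ℝ * Matrix.diagonal d)ᵀ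

/-- The signed graph `Γ_{s,n}`: the vertices `0, …, n-2` are pairwise adjacent,
the last vertex `n-1` is adjacent exactly to `0, …, s`, and every edge is positive
except the single negative edge joining `n-1` and `0`. -/
noncomputable def GammaSN (s n : ℕ) : Matrix (Fin n) (Fin n) ℝ :=
  fun i j =>
    if i = j then 0
    else if i.val ≠ n - 1 ∧ j.val ≠ n - 1 then 1
    else if min i.val j.val = 0 then -1
    else if min i.val j.val ≤ s then 1
    else 0

/-- The signed graph `Σ_{k,n}` with parameter `r`: vertex `0` is `u₁`, vertex `1` is `u₂`,
vertices `2, …, r+1` are `w₁, …, w_r`, vertices `r+2, …, r+k+1` are `q₁, …, q_k`, and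
vertices `r+k+2, …, n-1` are `v₁, …, v_{n-2-r-k}`.  The only negative edge is `u₁u₂`. -/
noncomputable def SigmaKN (r k n : ℕ) : Matrix (Fin n) (Fin n) ℝ :=
  fun i j =>
    if i = j then 0
    else if min i.val j.val = 0 then (if max i.val j.val = 1 then -1 else 1)
    else if min i.val j.val = 1 then (if max i.val j.val ≤ r + k + 1 then 1 else 0)
    else if max i.val j.val ≤ r + 1 then 1
    else if max i.val j.val ≤ r + k + 1 then 0
    else 1


section AuxLemmas


lemma sum_ite4 {n : ℕ} (a1 a2 a3 a4 : Fin n) (w1 w2 w3 w4 : ℝ)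
    (h12 : a1 ≠ a2) (h13 : a1 ≠ a3) (h14 : a1 ≠ a4) (h23 : a2 ≠ a3) (h24 : a2 ≠ a4)
    (h34 : a3 ≠ a4) :
    (∑ b : Fin n, (if b = a1 then w1 else if b = a2 then w2 else if b = a3 then w3
      else if b = a4 then w4 else 0)) = w1 + w2 + w3 + w4 := by
  have hpt : ∀ b : Fin n, (if b = a1 then w1 else if b = a2 then w2 else if b = a3 then w3
      else if b = a4 then w4 else 0) = (if b = a1 then w1 else 0) + (if b = a2 then w2 else 0)
      + (if b = a3 then w3 else 0) + (if b = a4 then w4 else 0) := by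
    intro b
    by_cases hb1 : b = a1 <;> by_cases hb2 : b = a2 <;> by_cases hb3 : b = a3 <;>
      by_cases hb4 : b = a4 <;> simp_all
  rw [Finset.sum_congr rfl (fun b _ => hpt b)]
  simp [Finset.sum_add_distrib]

lemma sum_ite2 {n : ℕ} (a1 a2 : Fin n) (w1 w2 : ℝ) (h12 : a1 ≠ a2) :
    (∑ b : Fin n, (if b = a1 then w1 else if b = a2 then w2 else 0)) = w1 + w2 := by
  have hpt : ∀ b : Fin n, (if b = a1 then w1 else if b = a2 then w2 else 0)
      = (if b = a1 then w1 else 0) + (if b = a2 then w2 else 0) := by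
    intro b
    by_cases hb1 : b = a1 <;> by_cases hb2 : b = a2 <;> simp_all
  rw [Finset.sum_congr rfl (fun b _ => hpt b)]
  simp [Finset.sum_add_distrib]

lemma neg_entry_of_prod_neg {m : ℕ} (f : ℕ → ℝ) (h : (∏ p ∈ Finset.range m, f p) < 0) :
    ∃ p < m, f p < 0 := by
  by_contra hc
  push_neg at hc
  exact absurd (Finset.prod_nonneg fun p hp => hc p (Finset.mem_range.mp hp)) (not_le.mpr h)


lemma rayleigh_le {n : ℕ} {B : Matrix (Fin n) (Fin n) ℝ} (hB : B.IsHermitian)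
    (y : Fin n → ℝ) : y ⬝ᵥ B *ᵥ y ≤ sSup (spectrum ℝ B) * (y ⬝ᵥ y) := by
  classical
  set U : Matrix (Fin n) (Fin n) ℝ := (hB.eigenvectorUnitary : Matrix (Fin n) (Fin n) ℝ) with hU
  have hUU : U * star U = 1 := (Matrix.mem_unitaryGroup_iff).mp hB.eigenvectorUnitary.2
  have hstar : star U = Uᵀ := by
    rw [Matrix.star_eq_conjTranspose, Matrix.conjTranspose_eq_transpose_of_trivial]
  set c : Fin n → ℝ := Uᵀ *ᵥ y with hc
  have hdiag : B = U * Matrix.diagonal hB.eigenvalues * Uᵀ := by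
    have := hB.spectral_theorem
    rw [Unitary.conjStarAlgAut_apply, hstar] at this
    exact this
  have hq : y ⬝ᵥ B *ᵥ y = ∑ k, hB.eigenvalues k * (c k * c k) := by
    conv_lhs => rw [hdiag]
    rw [← mulVec_mulVec, ← mulVec_mulVec, dotProduct_mulVec, ← mulVec_transpose]
    simp only [dotProduct, mulVec_diagonal, ← hc]
    exact Finset.sum_congr rfl (fun k _ => by ring)
  have hnorm : y ⬝ᵥ y = ∑ k, c k * c k := by
    have h1 : c ⬝ᵥ c = y ⬝ᵥ y := by
      rw [hc, dotProduct_mulVec, vecMul_transpose, mulVec_mulVec, ← hstar, hUU, one_mulVec]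
    rw [← h1]; rfl
  have hspec : spectrum ℝ B = Set.range hB.eigenvalues := hB.spectrum_real_eq_range_eigenvalues
  have hbdd : BddAbove (spectrum ℝ B) := by
    rw [hspec]; exact (Set.finite_range _).bddAbove
  have hle : ∀ k, hB.eigenvalues k ≤ sSup (spectrum ℝ B) :=
    fun k => le_csSup hbdd (hspec ▸ Set.mem_range_self k)
  rw [hq, hnorm, Finset.mul_sum]
  exact Finset.sum_le_sum fun k _ => mul_le_mul_of_nonneg_right (hle k) (mul_self_nonneg _)

section
variable {n : ℕ} (hn : 14 ≤ n)

lemma gam_diag (a : Fin n) : GammaSN 2 n a a = 0 := by simp [GammaSN]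

lemma gam_both (a b : Fin n) (hab : a ≠ b) (ha : a.val ≠ n-1) (hb : b.val ≠ n-1) :
    GammaSN 2 n a b = 1 := by
  simp [GammaSN, hab, ha, hb]

include hn

lemma gam_neg (a b : Fin n) (ha : a.val = 0) (hb : b.val = n-1) :
    GammaSN 2 n a b = -1 := by
  have hab : a ≠ b := by intro h; rw [h] at ha; omega
  simp only [GammaSN, if_neg hab]
  rw [if_neg (by omega), if_pos (by omega)]

lemma gam_neg' (a b : Fin n) (ha : a.val = n-1) (hb : b.val = 0) :
    GammaSN 2 n a b = -1 := by
  have hab : a ≠ b := by intro h; rw [h] at ha; omega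
  simp only [GammaSN, if_neg hab]
  rw [if_neg (by omega), if_pos (by omega)]

lemma gam_pos12 (a b : Fin n) (ha : a.val = n-1) (hb : b.val = 1 ∨ b.val = 2) :
    GammaSN 2 n a b = 1 := by
  have hab : a ≠ b := by intro h; rw [h] at ha; omega
  simp only [GammaSN, if_neg hab]
  rw [if_neg (by omega), if_neg (by omega), if_pos (by omega)]

lemma gam_pos12' (a b : Fin n) (ha : a.val = 1 ∨ a.val = 2) (hb : b.val = n-1) :
    GammaSN 2 n a b = 1 := by
  have hab : a ≠ b := by intro h; subst h; omega
  simp only [GammaSN, if_neg hab]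
  rw [if_neg (by omega), if_neg (by omega), if_pos (by omega)]

lemma gam_zero (a b : Fin n) (ha : a.val = n-1) (hb : 3 ≤ b.val) (hb' : b.val ≠ n-1) :
    GammaSN 2 n a b = 0 := by
  have hab : a ≠ b := by intro h; rw [h] at ha; omega
  simp only [GammaSN, if_neg hab]
  rw [if_neg (by omega), if_neg (by omega), if_neg (by omega)]

lemma gam_zero' (a b : Fin n) (ha : 3 ≤ a.val) (ha' : a.val ≠ n-1) (hb : b.val = n-1) :
    GammaSN 2 n a b = 0 := by
  have hab : a ≠ b := by intro h; rw [h] at ha'; omega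
  simp only [GammaSN, if_neg hab]
  rw [if_neg (by omega), if_neg (by omega), if_neg (by omega)]

lemma gam_neg_only (a b : Fin n) (h : GammaSN 2 n a b < 0) :
    (a.val = 0 ∧ b.val = n-1) ∨ (a.val = n-1 ∧ b.val = 0) := by
  by_contra hc
  push_neg at hc
  simp only [GammaSN] at h
  split_ifs at h with h1 h2 h3 h4 <;> [skip; skip; omega; skip; skip] <;> linarith

lemma gam_symm : (GammaSN 2 n).IsSymm := by
  ext a b
  simp only [Matrix.transpose_apply, GammaSN]
  by_cases hab : b = a
  · subst hab; rfl
  · rw [if_neg hab, if_neg (Ne.symm hab)]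
    split_ifs <;> first | rfl | tauto | omega

lemma gam_signed (a b : Fin n) : GammaSN 2 n a b = -1 ∨ GammaSN 2 n a b = 0 ∨ GammaSN 2 n a b = 1 := by
  simp only [GammaSN]; split_ifs <;> norm_num
end


section
variable {n : ℕ} (hn : 14 ≤ n)
include hn

lemma gam_unbalanced : IsUnbalanced (GammaSN 2 n) := by
  set z0 : Fin n := ⟨0, by omega⟩ with hz0
  set z1 : Fin n := ⟨1, by omega⟩ with hz1
  set zn : Fin n := ⟨n-1, by omega⟩ with hzn
  set c : ℕ → Fin n := fun p => if p = 0 then z0 else if p = 1 then zn else z1 with hc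
  have hc0 : c 0 = z0 := by norm_num [hc]
  have hc1 : c 1 = zn := by norm_num [hc]
  have hc2 : c 2 = z1 := by norm_num [hc]
  have e01 : GammaSN 2 n z0 zn = -1 := gam_neg hn _ _ rfl rfl
  have e12 : GammaSN 2 n zn z1 = 1 := gam_pos12 hn _ _ rfl (Or.inl rfl)
  have e20 : GammaSN 2 n z1 z0 = 1 := gam_both _ _
    (by simp [hz0, hz1, Fin.ext_iff]) (show (1:ℕ) ≠ n-1 by omega) (show (0:ℕ) ≠ n-1 by omega)
  refine ⟨3, le_refl 3, c, ?_, fun p _ => Set.mem_univ _, ?_, ?_⟩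
  · have hval : ∀ p, p < 3 → (c p).val = if p = 0 then 0 else if p = 1 then n-1 else 1 := by
      intro p hp
      interval_cases p
      · rw [hc0, hz0]; norm_num
      · rw [hc1, hzn]; norm_num
      · rw [hc2, hz1]; norm_num
    intro p hp q hq hpq
    have hv := congrArg Fin.val hpq
    rw [hval p hp, hval q hq] at hv
    split_ifs at hv <;> omega
  · intro p hp
    interval_cases p
    · rw [show (0+1)%3 = 1 from rfl, hc0, hc1, e01]; norm_num
    · rw [show (1+1)%3 = 2 from rfl, hc1, hc2, e12]; norm_num
    · rw [show (2+1)%3 = 0 from rfl, hc2, hc0, e20]; norm_num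
  · rw [Finset.prod_range_succ, Finset.prod_range_succ, Finset.prod_range_one,
      show (0+1)%3 = 1 from rfl, show (1+1)%3 = 2 from rfl, show (2+1)%3 = 0 from rfl,
      hc0, hc1, hc2, e01, e12, e20]
    norm_num

lemma gam_tk4free {t : ℕ} (ht : 2 ≤ t) : TK4Free t (GammaSN 2 n) := by
  set z0 : Fin n := ⟨0, by omega⟩ with hz0
  set z1 : Fin n := ⟨1, by omega⟩ with hz1
  set z2 : Fin n := ⟨2, by omega⟩ with hz2
  set zn : Fin n := ⟨n-1, by omega⟩ with hzn
  have hsub : {s : Finset (Fin n) | IsK4Minus (GammaSN 2 n) s} ⊆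
      {({z0, z1, z2, zn} : Finset (Fin n))} := by
    intro s hs
    obtain ⟨hcard, hadj, m, hm3, c, hinj, hmem, hne, hprod⟩ := hs
    obtain ⟨p, hp, hneg⟩ := neg_entry_of_prod_neg (fun q => GammaSN 2 n (c q) (c ((q+1)%m))) hprod
    have hedge := gam_neg_only hn _ _ hneg
    have hmem1 : c p ∈ s := by simpa using hmem p hp
    have hmem2 : c ((p+1) % m) ∈ s := by simpa using hmem _ (Nat.mod_lt _ (by omega))
    have h0n : z0 ∈ s ∧ zn ∈ s := by
      rcases hedge with ⟨ha, hb⟩ | ⟨ha, hb⟩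
      · exact ⟨(Fin.ext (show z0.val = _ from ha.symm) : z0 = c p) ▸ hmem1,
          (Fin.ext (show zn.val = _ from hb.symm) : zn = _) ▸ hmem2⟩
      · exact ⟨(Fin.ext (show z0.val = _ from hb.symm) : z0 = _) ▸ hmem2,
          (Fin.ext (show zn.val = _ from ha.symm) : zn = c p) ▸ hmem1⟩
    have hsubset : s ⊆ {z0, z1, z2, zn} := by
      intro w hw
      simp only [Finset.mem_insert, Finset.mem_singleton]
      by_cases hw0 : w = z0
      · exact Or.inl hw0
      by_cases hwn : w = zn
      · exact Or.inr (Or.inr (Or.inr hwn))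
      have hv0 : w.val ≠ 0 := fun h => hw0 (Fin.ext h)
      have hvn : w.val ≠ n - 1 := fun h => hwn (Fin.ext h)
      have hadj2 := hadj _ h0n.2 w hw (Ne.symm hwn)
      have hwval : w.val = 1 ∨ w.val = 2 := by
        by_contra hcon
        push_neg at hcon
        exact hadj2 (gam_zero hn _ _ rfl (by omega) hvn)
      rcases hwval with h | h
      · exact Or.inr (Or.inl (Fin.ext h))
      · exact Or.inr (Or.inr (Or.inl (Fin.ext h)))
    have hcard4 : ({z0, z1, z2, zn} : Finset (Fin n)).card ≤ 4 := by
      apply le_trans (Finset.card_insert_le _ _)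
      have := Finset.card_insert_le z1 ({z2, zn} : Finset (Fin n))
      have := Finset.card_insert_le z2 ({zn} : Finset (Fin n))
      simp only [Finset.card_singleton] at *
      omega
    exact Finset.eq_of_subset_of_card_le hsubset (by omega)
  have h1 := Set.ncard_le_ncard hsub (Set.finite_singleton _)
  simp only [Set.ncard_singleton] at h1
  exact lt_of_le_of_lt h1 (by omega)

end

noncomputable def tvec (n : ℕ) : Fin n → ℝ := fun k => if k.val = n - 1 then 1 else n
noncomputable def cfun (n : ℕ) : Fin n → ℝ :=
  fun a => if a.val = 0 then -1 else if a.val = 1 then 1 else if a.val = 2 then 1 else 0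

set_option maxHeartbeats 2000000 in
lemma gam_rayleigh {n : ℕ} (hn : 14 ≤ n) :
    (n:ℝ)^2*((n:ℝ)-1)*((n:ℝ)-2) + 2*(n:ℝ) ≤
      sSup (spectrum ℝ (GammaSN 2 n)) * ((n:ℝ)^2*((n:ℝ)-1) + 1) := by
  have h14 : (14:ℕ) ≤ n := hn
  set z0 : Fin n := ⟨0, by omega⟩ with hz0
  set z1 : Fin n := ⟨1, by omega⟩ with hz1
  set z2 : Fin n := ⟨2, by omega⟩ with hz2
  set zn : Fin n := ⟨n-1, by omega⟩ with hzn
  have d01 : z0 ≠ z1 := by simp [hz0, hz1, Fin.ext_iff]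
  have d02 : z0 ≠ z2 := by simp [hz0, hz2, Fin.ext_iff]
  have d0n : z0 ≠ zn := by simp [hz0, hzn, Fin.ext_iff]; omega
  have d12 : z1 ≠ z2 := by simp [hz1, hz2, Fin.ext_iff]
  have d1n : z1 ≠ zn := by simp [hz1, hzn, Fin.ext_iff]; omega
  have d2n : z2 ≠ zn := by simp [hz2, hzn, Fin.ext_iff]; omega
  set Γ : Matrix (Fin n) (Fin n) ℝ := GammaSN 2 n with hΓ
  have hyzn : tvec n zn = 1 := by simp [tvec, hzn]
  have hyval : ∀ b : Fin n, b ≠ zn → tvec n b = (n:ℝ) := by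
    intro b hb
    have : b.val ≠ n - 1 := fun h => hb (Fin.ext h)
    simp [tvec, this]
  have hca0 : cfun n z0 = -1 := by simp [cfun, hz0]
  have hca1 : cfun n z1 = 1 := by simp [cfun, hz1]
  have hca2 : cfun n z2 = 1 := by simp [cfun, hz2]
  have hcol : ∀ a : Fin n, a ≠ zn → Γ a zn = cfun n a := by
    intro a ha
    have hav : a.val ≠ n - 1 := fun h => ha (Fin.ext h)
    by_cases h0 : a = z0
    · subst h0
      rw [hΓ, gam_neg hn _ _ rfl rfl, hca0]

    by_cases h1 : a = z1
    · subst h1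
      rw [hΓ, gam_pos12' hn _ _ (Or.inl rfl) rfl, hca1]
    by_cases h2 : a = z2
    · subst h2
      rw [hΓ, gam_pos12' hn _ _ (Or.inr rfl) rfl, hca2]
    · have hv0 : a.val ≠ 0 := fun h => h0 (Fin.ext h)
      have hv1 : a.val ≠ 1 := fun h => h1 (Fin.ext h)
      have hv2 : a.val ≠ 2 := fun h => h2 (Fin.ext h)
      rw [hΓ, gam_zero' hn _ _ (by omega) hav rfl]
      simp [cfun, hv0, hv1, hv2]
  -- row sum at zn
  have hrowzn : (Γ *ᵥ tvec n) zn = (n:ℝ) := by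
    have hpt : ∀ b : Fin n, Γ zn b * tvec n b = (if b = z0 then -(n:ℝ) else if b = z1 then (n:ℝ)
        else if b = z2 then (n:ℝ) else if b = zn then 0 else 0) := by
      intro b
      by_cases h0 : b = z0
      · subst h0
        rw [hΓ, gam_neg' hn _ _ rfl rfl, hyval _ d0n]
        simp
      by_cases h1 : b = z1
      · subst h1
        rw [hΓ, gam_pos12 hn _ _ rfl (Or.inl rfl), hyval _ d1n]
        simp [h0]
      by_cases h2 : b = z2
      · subst h2
        rw [hΓ, gam_pos12 hn _ _ rfl (Or.inr rfl), hyval _ d2n]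
        simp [h0, h1]
      by_cases hbn : b = zn
      · subst hbn
        rw [hΓ, gam_diag]
        simp [h0, h1, h2]
      · have hv0 : b.val ≠ 0 := fun h => h0 (Fin.ext h)
        have hv1 : b.val ≠ 1 := fun h => h1 (Fin.ext h)
        have hv2 : b.val ≠ 2 := fun h => h2 (Fin.ext h)
        have hvn : b.val ≠ n - 1 := fun h => hbn (Fin.ext h)
        rw [hΓ, gam_zero hn _ _ rfl (by omega) hvn]
        simp [h0, h1, h2, hbn]
    rw [Matrix.mulVec, dotProduct, Finset.sum_congr rfl (fun b _ => hpt b),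
      sum_ite4 z0 z1 z2 zn _ _ _ _ d01 d02 d0n d12 d1n d2n]
    ring
  -- row sums away from zn
  have hrow : ∀ a : Fin n, a ≠ zn → (Γ *ᵥ tvec n) a = (n:ℝ)*((n:ℝ)-2) + cfun n a := by
    intro a ha
    have hav : a.val ≠ n - 1 := fun h => ha (Fin.ext h)
    have hpt : ∀ b : Fin n, Γ a b * tvec n b = (n:ℝ) + (if b = a then -(n:ℝ)
        else if b = zn then cfun n a - (n:ℝ) else 0) := by
      intro b
      by_cases hba : b = a
      · subst hba
        rw [hΓ, gam_diag]
        simp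
      by_cases hbn : b = zn
      · subst hbn
        have := hcol a ha
        rw [show Γ a zn = cfun n a from this, hyzn, if_neg hba, if_pos rfl]
        ring
      · have hbv : b.val ≠ n - 1 := fun h => hbn (Fin.ext h)
        rw [hΓ, gam_both a b (fun h => hba h.symm) hav hbv, hyval b hbn, if_neg hba, if_neg hbn]
        ring
    rw [Matrix.mulVec, dotProduct, Finset.sum_congr rfl (fun b _ => hpt b),
      Finset.sum_add_distrib, Finset.sum_const, Finset.card_univ, Fintype.card_fin,
      sum_ite2 a zn _ _ ha, nsmul_eq_mul]
    ring
  -- the quadratic form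
  have hq : tvec n ⬝ᵥ (Γ *ᵥ tvec n) = (n:ℝ)^2*((n:ℝ)-1)*((n:ℝ)-2) + 2*(n:ℝ) := by
    have hpt : ∀ a : Fin n, tvec n a * (Γ *ᵥ tvec n) a = (n:ℝ)*((n:ℝ)*((n:ℝ)-2))
        + (if a = z0 then -(n:ℝ) else if a = z1 then (n:ℝ) else if a = z2 then (n:ℝ)
           else if a = zn then (n:ℝ) - (n:ℝ)*((n:ℝ)*((n:ℝ)-2)) else 0) := by
      intro a
      by_cases h0 : a = z0
      · subst h0
        rw [hrow _ d0n, hyval _ d0n]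
        rw [if_pos rfl, hca0]; ring
      by_cases h1 : a = z1
      · subst h1
        rw [hrow _ d1n, hyval _ d1n]
        rw [if_neg h0, if_pos rfl, hca1]; ring
      by_cases h2 : a = z2
      · subst h2
        rw [hrow _ d2n, hyval _ d2n]
        rw [if_neg h0, if_neg h1, if_pos rfl, hca2]; ring
      by_cases han : a = zn
      · subst han
        rw [hrowzn, hyzn]
        rw [if_neg h0, if_neg h1, if_neg h2, if_pos rfl]; ring
      · rw [hrow _ han, hyval _ han]
        rw [if_neg h0, if_neg h1, if_neg h2, if_neg han]
        have hv0 : a.val ≠ 0 := fun h => h0 (Fin.ext h)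
        have hv1 : a.val ≠ 1 := fun h => h1 (Fin.ext h)
        have hv2 : a.val ≠ 2 := fun h => h2 (Fin.ext h)
        have : cfun n a = 0 := by simp [cfun, hv0, hv1, hv2]
        rw [this]; ring
    rw [dotProduct, Finset.sum_congr rfl (fun a _ => hpt a),
      Finset.sum_add_distrib, Finset.sum_const, Finset.card_univ, Fintype.card_fin,
      sum_ite4 z0 z1 z2 zn _ _ _ _ d01 d02 d0n d12 d1n d2n, nsmul_eq_mul]
    ring
  have hyy : tvec n ⬝ᵥ tvec n = (n:ℝ)^2*((n:ℝ)-1) + 1 := by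
    have hpt : ∀ b : Fin n, tvec n b * tvec n b = (n:ℝ)*(n:ℝ)
        + (if b = zn then 1 - (n:ℝ)*(n:ℝ) else 0) := by
      intro b
      by_cases hbn : b = zn
      · subst hbn; rw [hyzn]; simp
      · rw [hyval _ hbn, if_neg hbn]; ring
    rw [dotProduct, Finset.sum_congr rfl (fun b _ => hpt b),
      Finset.sum_add_distrib, Finset.sum_const, Finset.card_univ, Fintype.card_fin,
      Finset.sum_ite_eq' Finset.univ zn (fun _ => 1 - (n:ℝ)*(n:ℝ)), nsmul_eq_mul]
    simp
    ring
  have hherm : Γ.IsHermitian := by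
    rw [Matrix.IsHermitian, Matrix.conjTranspose_eq_transpose_of_trivial]
    exact gam_symm hn
  have := rayleigh_le hherm (tvec n)
  rw [hq, hyy] at this
  exact this

end AuxLemmas

theorem extremal_private_neighborhood_clique (t r : ℕ) (ht : 2 ≤ t)
    (hr : (r : ℝ) = (1 + Real.sqrt (8 * (t : ℝ) - 7)) / 2) :
    ∃ N : ℕ, ∀ n : ℕ, ∀ _hn : N + 4 ≤ n, t ≤ (n - 2).choose 2 →
      ∀ (A : Matrix (Fin n) (Fin n) ℝ) (x : Fin n → ℝ),
        IsSignedGraph A → IsUnbalanced A → TK4Free t A →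
        (∀ B : Matrix (Fin n) (Fin n) ℝ,
          IsSignedGraph B → IsUnbalanced B → TK4Free t B → lambdaMax B ≤ lambdaMax A) →
        (∀ i, 0 ≤ x i) → (∑ i, x i ^ 2) = 1 → A.mulVec x = lambdaMax A • x →
        let v1 : Fin n := ⟨0, by omega⟩
        let v2 : Fin n := ⟨1, by omega⟩
        let vn : Fin n := ⟨n - 1, by omega⟩
        A v1 vn < 0 →
        (∀ i j : Fin n, A i j < 0 → (i = v1 ∧ j = vn) ∨ (i = vn ∧ j = v1)) →
        x vn ≤ x v1 →
        ∀ i j : Fin n, i ≠ j →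
          A v1 i ≠ 0 → A vn i = 0 → i ≠ vn →
          A v1 j ≠ 0 → A vn j = 0 → j ≠ vn →
          0 < A i j := by
  refine ⟨14, ?_⟩
  intro n hn hchoose A x hsg hunb hfree hmax hxnn hxnorm heig
  intro v1 v2 vn hneg huniq hxle i j hij h1i hni hivn h1j hnj hjvn
  have h14 : 14 ≤ n := by omega
  obtain ⟨hsymm, hdiag, hent⟩ := hsg
  have hsymm' : ∀ a b : Fin n, A b a = A a b := fun a b => congrFun (congrFun hsymm a) b
  have hiv1 : i ≠ v1 := fun h => h1i (by rw [h]; exact hdiag v1)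
  have hjv1 : j ≠ v1 := fun h => h1j (by rw [h]; exact hdiag v1)
  have hxx : x ⬝ᵥ x = 1 := by
    rw [dotProduct, ← hxnorm]
    exact Finset.sum_congr rfl fun k _ => (sq (x k)).symm
  have hxAx : x ⬝ᵥ (A *ᵥ x) = lambdaMax A := by
    show x ⬝ᵥ (A.mulVec x) = _
    rw [heig, dotProduct_smul, smul_eq_mul, hxx, mul_one]
  -- lower bound on the index
  have hΓle : sSup (spectrum ℝ (GammaSN 2 n)) ≤ lambdaMax A :=
    hmax _ ⟨gam_symm h14, fun a => gam_diag a, fun a b => gam_signed h14 a b⟩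
      (gam_unbalanced h14) (gam_tk4free h14 ht)
  have hnR : (14:ℝ) ≤ (n:ℝ) := by exact_mod_cast h14
  have hlamgt : (n:ℝ) - 2 < lambdaMax A := by
    have h1 := gam_rayleigh h14
    have hP : (0:ℝ) < (n:ℝ)^2*((n:ℝ)-1) + 1 := by nlinarith
    have h2 : sSup (spectrum ℝ (GammaSN 2 n)) * ((n:ℝ)^2*((n:ℝ)-1) + 1) ≤
        lambdaMax A * ((n:ℝ)^2*((n:ℝ)-1) + 1) :=
      mul_le_mul_of_nonneg_right hΓle (le_of_lt hP)
    nlinarith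
  -- no zero coordinate of the eigenvector
  have hnz : ∀ k : Fin n, x k ≠ 0 := by
    intro k hk
    have hcard : 0 < (Finset.univ.erase k).card := by
      rw [Finset.card_erase_of_mem (Finset.mem_univ k), Finset.card_univ, Fintype.card_fin]
      omega
    obtain ⟨m, hm_mem, hm_max⟩ :=
      Finset.exists_max_image (Finset.univ.erase k) x (Finset.card_pos.mp hcard)
    have hmk : m ≠ k := Finset.ne_of_mem_erase hm_mem
    have hxm_pos : 0 < x m := by
      obtain ⟨l, hl⟩ : ∃ l, x l ≠ 0 := by
        by_contra hcon
        push_neg at hcon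
        have : (∑ a, x a ^ 2) = 0 := Finset.sum_eq_zero fun a _ => by rw [hcon a]; ring
        rw [this] at hxnorm
        norm_num at hxnorm
      have hlk : l ≠ k := fun h => hl (h ▸ hk)
      have h1 := hm_max l (Finset.mem_erase.mpr ⟨hlk, Finset.mem_univ l⟩)
      have h2 : 0 < x l := lt_of_le_of_ne (hxnn l) (Ne.symm hl)
      linarith
    have heigm : lambdaMax A * x m = ∑ l, A m l * x l := by
      have h1 := congrFun heig m
      simp only [Matrix.mulVec, dotProduct, Pi.smul_apply, smul_eq_mul] at h1
      exact h1.symm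
    have hbound : ∑ l, A m l * x l ≤
        ∑ l : Fin n, (x m + (if l = m then -(x m) else if l = k then -(x m) else 0)) := by
      apply Finset.sum_le_sum
      intro l _
      by_cases hlm : l = m
      · subst hlm
        rw [hdiag, zero_mul, if_pos rfl]
        linarith
      by_cases hlk : l = k
      · subst hlk
        rw [hk, mul_zero, if_neg hlm, if_pos rfl]
        linarith
      · rw [if_neg hlm, if_neg hlk]
        have h1 : A m l ≤ 1 := by rcases hent m l with h|h|h <;> rw [h] <;> norm_num
        have h2 : A m l * x l ≤ x l := by nlinarith [hxnn l]
        have h3 := hm_max l (Finset.mem_erase.mpr ⟨hlk, Finset.mem_univ l⟩)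
        linarith
    have hsum : ∑ l : Fin n, (x m + (if l = m then -(x m) else if l = k then -(x m) else 0))
        = ((n:ℝ) - 2) * x m := by
      rw [Finset.sum_add_distrib, Finset.sum_const, Finset.card_univ, Fintype.card_fin,
        sum_ite2 m k _ _ hmk, nsmul_eq_mul]
      ring
    have hle2 : lambdaMax A ≤ (n:ℝ) - 2 := by
      have := heigm.le.trans (hbound.trans hsum.le)
      exact le_of_mul_le_mul_right this hxm_pos
    linarith
  -- the entry cannot be negative
  rcases hent i j with hAij | hAij | hAij
  · exfalso
    rcases huniq i j (by rw [hAij]; norm_num) with ⟨h1, _⟩ | ⟨h1, _⟩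
    · exact hiv1 h1
    · exact hivn h1
  · -- the entry cannot be zero: add the edge ij
    exfalso
    have hAji : A j i = 0 := by rw [hsymm' i j, hAij]
    set B : Matrix (Fin n) (Fin n) ℝ :=
      fun a b => if (a = i ∧ b = j) ∨ (a = j ∧ b = i) then 1 else A a b with hBdef
    have hBeq : ∀ a b, B a b = if (a = i ∧ b = j) ∨ (a = j ∧ b = i) then 1 else A a b :=
      fun a b => rfl
    have hBA : ∀ a b, A a b ≠ 0 → B a b = A a b := by
      intro a b hab
      rw [hBeq]
      by_cases hc : (a = i ∧ b = j) ∨ (a = j ∧ b = i)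
      · exfalso
        rcases hc with ⟨h1, h2⟩ | ⟨h1, h2⟩
        · exact hab (by rw [h1, h2, hAij])
        · exact hab (by rw [h1, h2, hAji])
      · rw [if_neg hc]
    have hBsymm : B.IsSymm := by
      have key : ∀ a b : Fin n, ((b = i ∧ a = j) ∨ (b = j ∧ a = i)) ↔
          ((a = i ∧ b = j) ∨ (a = j ∧ b = i)) := by tauto
      ext a b
      rw [Matrix.transpose_apply, hBeq, hBeq]
      by_cases hc : (a = i ∧ b = j) ∨ (a = j ∧ b = i)
      · rw [if_pos ((key a b).mpr hc), if_pos hc]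
      · rw [if_neg (fun h => hc ((key a b).mp h)), if_neg hc, hsymm' a b]
    have hBdiag : ∀ a, B a a = 0 := by
      intro a
      rw [hBeq, if_neg, hdiag]
      rintro (⟨h1, h2⟩ | ⟨h1, h2⟩)
      · exact hij (h1.symm.trans h2)
      · exact hij (h2.symm.trans h1)
    have hBsigned : IsSignedGraph B := by
      refine ⟨hBsymm, hBdiag, fun a b => ?_⟩
      rw [hBeq]
      split_ifs with hc
      · norm_num
      · exact hent a b
    have hBunb : IsUnbalanced B := by
      obtain ⟨m, hm3, c, hinj, hmem, hne, hprod⟩ := hunb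
      refine ⟨m, hm3, c, hinj, hmem, ?_, ?_⟩
      · intro p hp
        rw [hBA _ _ (hne p hp)]
        exact hne p hp
      · rw [Finset.prod_congr rfl (fun p hp => hBA _ _ (hne p (Finset.mem_range.mp hp)))]
        exact hprod
    have hBk4 : ∀ s, IsK4Minus B s → IsK4Minus A s := by
      intro s hs
      obtain ⟨hcard, hadj, m, hm3, c, hinj, hmem, hne, hprod⟩ := hs
      have hnotij : ¬ (i ∈ s ∧ j ∈ s) := by
        rintro ⟨his, hjs⟩
        obtain ⟨p, hp, hneg'⟩ :=
          neg_entry_of_prod_neg (fun q => B (c q) (c ((q+1)%m))) hprod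
        have hAneg : A (c p) (c ((p+1)%m)) < 0 := by
          have hBv := hneg'
          rw [hBeq] at hBv
          by_cases hc : (c p = i ∧ c ((p+1)%m) = j) ∨ (c p = j ∧ c ((p+1)%m) = i)
          · rw [if_pos hc] at hBv; norm_num at hBv
          · rwa [if_neg hc] at hBv
        have hmem1 : c p ∈ s := by
          have := hmem p hp
          simpa using this
        have hmem2 : c ((p+1)%m) ∈ s := by
          have := hmem ((p+1)%m) (Nat.mod_lt _ (by omega))
          simpa using this
        have hvns : vn ∈ s := by
          rcases huniq _ _ hAneg with ⟨h1, h2⟩ | ⟨h1, h2⟩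
          · exact h2 ▸ hmem2
          · exact h1 ▸ hmem1
        have hadj2 : B vn i ≠ 0 := hadj vn hvns i his (Ne.symm hivn)
        apply hadj2
        rw [hBeq, if_neg, hni]
        rintro (⟨h1, h2⟩ | ⟨h1, h2⟩)
        · exact hivn h1.symm
        · exact hjvn h1.symm
      have hsame : ∀ a ∈ s, ∀ b ∈ s, B a b = A a b := by
        intro a ha b hb
        rw [hBeq, if_neg]
        rintro (⟨h1, h2⟩ | ⟨h1, h2⟩)
        · exact hnotij ⟨h1 ▸ ha, h2 ▸ hb⟩
        · exact hnotij ⟨h2 ▸ hb, h1 ▸ ha⟩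
      refine ⟨hcard, fun a ha b hb hab => by rw [← hsame a ha b hb]; exact hadj a ha b hb hab,
        m, hm3, c, hinj, hmem, ?_, ?_⟩
      · intro p hp
        rw [← hsame _ (by simpa using hmem p hp) _
          (by simpa using hmem ((p+1)%m) (Nat.mod_lt _ (by omega)))]
        exact hne p hp
      · have : ∀ p ∈ Finset.range m, A (c p) (c ((p+1)%m)) = B (c p) (c ((p+1)%m)) := by
          intro p hp
          have hp' := Finset.mem_range.mp hp
          exact (hsame _ (by simpa using hmem p hp') _
            (by simpa using hmem ((p+1)%m) (Nat.mod_lt _ (by omega)))).symm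
        rw [Finset.prod_congr rfl this]
        exact hprod
    have hBfree : TK4Free t B := by
      have hsubs : {s : Finset (Fin n) | IsK4Minus B s} ⊆ {s | IsK4Minus A s} :=
        fun s hs => hBk4 s hs
      exact lt_of_le_of_lt (Set.ncard_le_ncard hsubs (Set.toFinite _)) hfree
    have hBle : sSup (spectrum ℝ B) ≤ lambdaMax A := hmax B hBsigned hBunb hBfree
    have hBherm : B.IsHermitian := by
      rw [Matrix.IsHermitian, Matrix.conjTranspose_eq_transpose_of_trivial]
      exact hBsymm
    have hray := rayleigh_le hBherm x
    have hmv : ∀ a, (B *ᵥ x) a = (A *ᵥ x) a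
        + (if a = i then x j else 0) + (if a = j then x i else 0) := by
      intro a
      have hpt : ∀ b, B a b * x b = A a b * x b
          + (if a = i ∧ b = j then x b else 0) + (if a = j ∧ b = i then x b else 0) := by
        intro b
        rw [hBeq]
        by_cases h1 : a = i ∧ b = j
        · have h2 : ¬(a = j ∧ b = i) := by
            rintro ⟨h2a, h2b⟩
            exact hij (h1.1.symm.trans h2a)
          rw [if_pos (Or.inl h1), if_pos h1, if_neg h2, h1.1, h1.2, hAij]
          ring
        · by_cases h2 : a = j ∧ b = i
          · rw [if_pos (Or.inr h2), if_neg h1, if_pos h2, h2.1, h2.2, hAji]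
            ring
          · rw [if_neg (by tauto), if_neg h1, if_neg h2]
            ring
      show (∑ b, B a b * x b) = _
      rw [Finset.sum_congr rfl (fun b _ => hpt b), Finset.sum_add_distrib,
        Finset.sum_add_distrib]
      have s1 : (∑ b, (if a = i ∧ b = j then x b else 0)) = (if a = i then x j else 0) := by
        by_cases ha : a = i
        · simp only [ha, true_and, if_pos rfl]
          rw [Finset.sum_ite_eq' Finset.univ j x]
          simp
        · simp [ha]
      have s2 : (∑ b, (if a = j ∧ b = i then x b else 0)) = (if a = j then x i else 0) := by
        by_cases ha : a = j
        · simp only [ha, true_and, if_pos rfl]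
          rw [Finset.sum_ite_eq' Finset.univ i x]
          simp
        · simp [ha]
      rw [s1, s2]
      rfl
    have hquad : x ⬝ᵥ (B *ᵥ x) = lambdaMax A + 2 * (x i * x j) := by
      have hpt : ∀ a, x a * (B *ᵥ x) a = x a * (A *ᵥ x) a
          + (if a = i then x a * x j else 0) + (if a = j then x a * x i else 0) := by
        intro a
        rw [hmv a]
        by_cases ha1 : a = i
        · by_cases ha2 : a = j
          · exact absurd (ha1.symm.trans ha2) hij
          · rw [if_pos ha1, if_pos ha1, if_neg ha2, if_neg ha2]; ring
        · by_cases ha2 : a = j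
          · rw [if_neg ha1, if_neg ha1, if_pos ha2, if_pos ha2]; ring
          · rw [if_neg ha1, if_neg ha1, if_neg ha2, if_neg ha2]; ring
      rw [dotProduct, Finset.sum_congr rfl (fun a _ => hpt a), Finset.sum_add_distrib,
        Finset.sum_add_distrib]
      have e1 : (∑ a, (if a = i then x a * x j else 0)) = x i * x j := by
        rw [Finset.sum_ite_eq' Finset.univ i (fun a => x a * x j)]
        simp
      have e2 : (∑ a, (if a = j then x a * x i else 0)) = x j * x i := by
        rw [Finset.sum_ite_eq' Finset.univ j (fun a => x a * x i)]
        simp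
      rw [e1, e2]
      have : (∑ a, x a * (A *ᵥ x) a) = lambdaMax A := hxAx
      rw [this]
      ring
    rw [hquad, hxx, mul_one] at hray
    have hxi : 0 < x i := lt_of_le_of_ne (hxnn i) (Ne.symm (hnz i))
    have hxj : 0 < x j := lt_of_le_of_ne (hxnn j) (Ne.symm (hnz j))
    nlinarith [mul_pos hxi hxj]
  · rw [hAij]
    norm_num
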